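/- Let A be a unique factorization domain and f ∈ A a nonzero element. Then the radical √(fA) of the principal ideal (f) is principal, say √(fA) = (r), and MO(A, f) is the cyclic A-submodule of A[f⁻¹] generated by r/f; moreover MO(A, f) is a free A-module of rank one (the map A → MO(A,f), a ↦ a·(r/f), is an A-module isomorphism). Explicitly, if f = c·p₁^{m₁}···p_n^{m_n} with c a unit, the p_i pairwise non-associated irreducible elements, and m_i > 0 for all i, then MO(A, f) = (1/(p₁^{m₁−1}···p_n^{m_n−1}))·A inside A[f⁻¹]. -/

import Mathlib

/-- `MO(A,f)`: the subset of the localization `L` (with localization map `ι : A →+* L`)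
consisting of those `x` with `ι f * x = ι a` for some `a` in the radical of `(f)`. -/
def MOset {A L : Type*} [CommRing A] [CommRing L] (ι : A →+* L) (f : A) : Set L :=
  {x | ∃ a ∈ (Ideal.span {f}).radical, ι a = ι f * x}

section Aux

variable {A : Type*} [CommRing A] [IsDomain A] [UniqueFactorizationMonoid A]

/-- A product of pairwise non-associated primes each dividing `x` divides `x`. -/
lemma aux_multiset_prod_dvd {s : Multiset A}
    (hp : ∀ a ∈ s, Prime a) (hnd : s.Nodup)
    (heq : ∀ a ∈ s, ∀ b ∈ s, Associated a b → a = b)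
    {x : A} (h : ∀ a ∈ s, a ∣ x) : s.prod ∣ x := by
  induction s using Multiset.induction_on generalizing x with
  | empty => simp
  | cons a s ih =>
    rw [Multiset.prod_cons]
    have hnd' := Multiset.nodup_cons.mp hnd
    have hps : s.prod ∣ x := ih (fun b hb => hp b (Multiset.mem_cons_of_mem hb)) hnd'.2
      (fun b hb c hc => heq b (Multiset.mem_cons_of_mem hb) c (Multiset.mem_cons_of_mem hc))
      (fun b hb => h b (Multiset.mem_cons_of_mem hb))
    obtain ⟨y, rfl⟩ := hps
    have ha := hp a (Multiset.mem_cons_self a s)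
    have hax : a ∣ s.prod * y := h a (Multiset.mem_cons_self a s)
    rcases ha.dvd_or_dvd hax with hd | hd
    · exfalso
      obtain ⟨b, hb, hab⟩ := ha.exists_mem_multiset_dvd hd
      have hbp := hp b (Multiset.mem_cons_of_mem hb)
      have : a = b := heq a (Multiset.mem_cons_self a s) b (Multiset.mem_cons_of_mem hb)
        (ha.irreducible.associated_of_dvd hbp.irreducible hab)
      exact hnd'.1 (this ▸ hb)
    · obtain ⟨z, rfl⟩ := hd
      exact ⟨z, by ring⟩

lemma aux_radical_span {f r : A}
    (hr1 : ∀ a : A, (∃ k, f ∣ a ^ k) → r ∣ a)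
    (hr2 : ∃ k, f ∣ r ^ k) :
    (Ideal.span {f}).radical = Ideal.span {r} := by
  apply le_antisymm
  · intro a ha
    rw [Ideal.mem_radical_iff] at ha
    rw [Ideal.mem_span_singleton]
    obtain ⟨k, hk⟩ := ha
    exact hr1 a ⟨k, Ideal.mem_span_singleton.mp hk⟩
  · rw [Ideal.span_le, Set.singleton_subset_iff]
    obtain ⟨k, hk⟩ := hr2
    exact ⟨k, Ideal.mem_span_singleton.mpr hk⟩

lemma aux_rad_factors {n : ℕ} {c : A} {p : Fin n → A} {m : Fin n → ℕ} {f : A}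
    (hc : IsUnit c) (hp : ∀ i, Irreducible (p i))
    (hass : ∀ i j, i ≠ j → ¬ Associated (p i) (p j))
    (hm : ∀ i, 0 < m i) (hfac : f = c * ∏ i, p i ^ m i) :
    (Ideal.span {f}).radical = Ideal.span {∏ i, p i} := by
  have hprime : ∀ i, Prime (p i) := fun i =>
    UniqueFactorizationMonoid.irreducible_iff_prime.mp (hp i)
  apply aux_radical_span
  · rintro a ⟨k, hk⟩
    have hpa : ∀ i, p i ∣ a := by
      intro i
      have hpf : p i ∣ f := by
        rw [hfac]
        exact Dvd.dvd.mul_left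
          ((dvd_pow_self (p i) (hm i).ne').trans
            (Finset.dvd_prod_of_mem (fun j => p j ^ m j) (Finset.mem_univ i))) c
      rcases Nat.eq_zero_or_pos k with rfl | hk0
      · exact absurd (isUnit_of_dvd_unit hpf (isUnit_of_dvd_one (by simpa using hk)))
          (hprime i).not_unit
      · exact (hprime i).dvd_of_dvd_pow (hpf.trans hk)
    rw [Finset.prod_eq_multiset_prod]
    apply aux_multiset_prod_dvd
    · intro b hb
      obtain ⟨i, _, rfl⟩ := Multiset.mem_map.mp hb
      exact hprime i
    · refine Multiset.Nodup.map_on ?_ Finset.univ.nodup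
      intro i _ j _ hij
      by_contra hne
      exact hass i j hne (hij ▸ Associated.refl _)
    · intro b hb b' hb' hassoc
      obtain ⟨i, _, rfl⟩ := Multiset.mem_map.mp hb
      obtain ⟨j, _, rfl⟩ := Multiset.mem_map.mp hb'
      by_cases hij : i = j
      · rw [hij]
      · exact absurd hassoc (hass i j hij)
    · intro b hb
      obtain ⟨i, _, rfl⟩ := Multiset.mem_map.mp hb
      exact hpa i
  · refine ⟨Finset.univ.sup m, ?_⟩
    rw [hfac, mul_comm c, (hc.mul_right_dvd)]
    calc (∏ i, p i ^ m i) ∣ ∏ i, p i ^ (Finset.univ.sup m) :=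
          Finset.prod_dvd_prod_of_dvd _ _
            (fun i _ => pow_dvd_pow _ (Finset.le_sup (Finset.mem_univ i)))
      _ = (∏ i, p i) ^ (Finset.univ.sup m) := by rw [Finset.prod_pow]

lemma aux_MO_range {f r : A} (hrad : (Ideal.span {f}).radical = Ideal.span {r}) :
    MOset (algebraMap A (Localization.Away f)) f =
      Set.range (fun a : A =>
        a • IsLocalization.mk' (Localization.Away f) r
          (⟨f, Submonoid.mem_powers f⟩ : Submonoid.powers f)) := by
  set ι := algebraMap A (Localization.Away f) with hι
  have hu : IsUnit (ι f) :=
    IsLocalization.map_units (Localization.Away f) ⟨f, Submonoid.mem_powers f⟩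
  have hspec : ι f * IsLocalization.mk' (Localization.Away f) r
      (⟨f, Submonoid.mem_powers f⟩ : Submonoid.powers f) = ι r :=
    IsLocalization.mk'_spec' _ r ⟨f, Submonoid.mem_powers f⟩
  ext x
  constructor
  · rintro ⟨a, ha, hax⟩
    rw [hrad, Ideal.mem_span_singleton] at ha
    obtain ⟨b, rfl⟩ := ha
    refine ⟨b, ?_⟩
    apply hu.mul_left_cancel
    calc ι f * (b • IsLocalization.mk' (Localization.Away f) r
          (⟨f, Submonoid.mem_powers f⟩ : Submonoid.powers f))
        = ι b * (ι f * IsLocalization.mk' (Localization.Away f) r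
          (⟨f, Submonoid.mem_powers f⟩ : Submonoid.powers f)) := by
          rw [Algebra.smul_def]; ring
      _ = ι b * ι r := by rw [hspec]
      _ = ι (r * b) := by rw [← map_mul, mul_comm]
      _ = ι f * x := hax
  · rintro ⟨a, rfl⟩
    refine ⟨r * a, by rw [hrad]; exact Ideal.mem_span_singleton.mpr ⟨a, rfl⟩, ?_⟩
    calc ι (r * a) = ι a * ι r := by rw [map_mul, mul_comm]
      _ = ι a * (ι f * IsLocalization.mk' (Localization.Away f) r
          (⟨f, Submonoid.mem_powers f⟩ : Submonoid.powers f)) := by rw [hspec]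
      _ = ι f * (a • IsLocalization.mk' (Localization.Away f) r
          (⟨f, Submonoid.mem_powers f⟩ : Submonoid.powers f)) := by
          rw [Algebra.smul_def]; ring

lemma aux_inj {f r : A} (hf : f ≠ 0)
    (hrad : (Ideal.span {f}).radical = Ideal.span {r}) :
    Function.Injective (fun a : A =>
      a • IsLocalization.mk' (Localization.Away f) r
        (⟨f, Submonoid.mem_powers f⟩ : Submonoid.powers f)) := by
  set ι := algebraMap A (Localization.Away f) with hι
  have hinj : Function.Injective ι :=
    IsLocalization.injective (Localization.Away f)
      (powers_le_nonZeroDivisors_of_noZeroDivisors hf)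
  have hr0 : r ≠ 0 := by
    have : f ∈ Ideal.span {r} := by
      rw [← hrad]
      exact Ideal.le_radical (Ideal.mem_span_singleton.mpr (dvd_refl f))
    obtain ⟨b, rfl⟩ := Ideal.mem_span_singleton.mp this
    rintro rfl
    exact hf (zero_mul b)
  have hspec : ι f * IsLocalization.mk' (Localization.Away f) r
      (⟨f, Submonoid.mem_powers f⟩ : Submonoid.powers f) = ι r :=
    IsLocalization.mk'_spec' _ r ⟨f, Submonoid.mem_powers f⟩
  intro a b hab
  have key : ∀ t : A, ι f * (t • IsLocalization.mk' (Localization.Away f) r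
      (⟨f, Submonoid.mem_powers f⟩ : Submonoid.powers f)) = ι (r * t) := by
    intro t
    calc ι f * (t • IsLocalization.mk' (Localization.Away f) r
          (⟨f, Submonoid.mem_powers f⟩ : Submonoid.powers f))
        = ι t * (ι f * IsLocalization.mk' (Localization.Away f) r
          (⟨f, Submonoid.mem_powers f⟩ : Submonoid.powers f)) := by
          rw [Algebra.smul_def]; ring
      _ = ι (r * t) := by rw [hspec, ← map_mul, mul_comm]
  have : ι (r * a) = ι (r * b) := by
    rw [← key a, ← key b]
    simp only at hab
    rw [hab]
  exact mul_left_cancel₀ hr0 (hinj this)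

lemma aux_MO_explicit {f c q r0 : A} (hc : IsUnit c)
    (hfac : f = c * q * r0)
    (hrad : (Ideal.span {f}).radical = Ideal.span {r0}) :
    MOset (algebraMap A (Localization.Away f)) f =
      {x | ∃ a : A, algebraMap A (Localization.Away f) q * x =
        algebraMap A (Localization.Away f) a} := by
  set ι := algebraMap A (Localization.Away f) with hι
  obtain ⟨u, rfl⟩ := hc
  have hu : IsUnit (ι f) :=
    IsLocalization.map_units (Localization.Away f) ⟨f, Submonoid.mem_powers f⟩
  ext x
  constructor
  · rintro ⟨a, ha, hax⟩
    rw [hrad, Ideal.mem_span_singleton] at ha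
    obtain ⟨b, rfl⟩ := ha
    refine ⟨b * ↑u⁻¹, ?_⟩
    apply hu.mul_left_cancel
    have hA2 : f * (b * ↑u⁻¹) = q * (r0 * b) := by
      rw [hfac]
      have h1 : ((u : A) * ↑u⁻¹) = 1 := u.mul_inv
      calc (↑u * q * r0) * (b * ↑u⁻¹) = ((u : A) * ↑u⁻¹) * (q * (r0 * b)) := by ring
        _ = q * (r0 * b) := by rw [h1, one_mul]
    calc ι f * (ι q * x) = ι q * (ι f * x) := by ring
      _ = ι q * ι (r0 * b) := by rw [← hax]
      _ = ι (q * (r0 * b)) := by rw [← map_mul]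
      _ = ι (f * (b * ↑u⁻¹)) := by rw [hA2]
      _ = ι f * ι (b * ↑u⁻¹) := by rw [map_mul]
  · rintro ⟨a, hqa⟩
    refine ⟨↑u * r0 * a, ?_, ?_⟩
    · rw [hrad, Ideal.mem_span_singleton]
      exact ⟨↑u * a, by ring⟩
    · calc ι (↑u * r0 * a) = ι ↑u * ι r0 * ι a := by rw [map_mul, map_mul]
        _ = ι ↑u * ι r0 * (ι q * x) := by rw [hqa]
        _ = ι (↑u * q * r0) * x := by rw [map_mul, map_mul]; ring
        _ = ι f * x := by rw [← hfac]

end Aux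

/-- if `A` is a UFD and `f ≠ 0`, then `√(fA)` is principal, say `(r)`,
`MO(A,f)` is the cyclic `A`-submodule of `A[f⁻¹]` generated by `r/f`, and
`a ↦ a • (r/f)` is injective, so `MO(A,f)` is free of rank one. Explicitly, if
`f = c·∏ pᵢ^{mᵢ}` with `c` a unit, the `pᵢ` pairwise non-associated irreducibles and
`mᵢ > 0`, then `MO(A,f) = (1/∏ pᵢ^{mᵢ-1})·A` inside `A[f⁻¹]`. -/
theorem stmt10 {A : Type*} [CommRing A] [IsDomain A] [UniqueFactorizationMonoid A]
    (f : A) (hf : f ≠ 0) :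
    (∃ r : A,
      (Ideal.span {f}).radical = Ideal.span {r} ∧
      MOset (algebraMap A (Localization.Away f)) f =
        Set.range (fun a : A =>
          a • IsLocalization.mk' (Localization.Away f) r
            (⟨f, Submonoid.mem_powers f⟩ : Submonoid.powers f)) ∧
      Function.Injective (fun a : A =>
        a • IsLocalization.mk' (Localization.Away f) r
          (⟨f, Submonoid.mem_powers f⟩ : Submonoid.powers f))) ∧
    ∀ (n : ℕ) (c : A) (p : Fin n → A) (m : Fin n → ℕ),
      IsUnit c → (∀ i, Irreducible (p i)) →
      (∀ i j, i ≠ j → ¬ Associated (p i) (p j)) →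
      (∀ i, 0 < m i) →
      f = c * ∏ i, p i ^ m i →
      MOset (algebraMap A (Localization.Away f)) f =
        {x | ∃ a : A,
          algebraMap A (Localization.Away f) (∏ i, p i ^ (m i - 1)) * x =
            algebraMap A (Localization.Away f) a} := by
  constructor
  · -- Part 1: use the radical of `f` in the UFD sense.
    letI : NormalizationMonoid A := UniqueFactorizationMonoid.normalizationMonoid.toNormalizationMonoid
    classical
    have hprod : (UniqueFactorizationMonoid.primeFactors f).val.prod =
        UniqueFactorizationMonoid.radical f := by
      rw [UniqueFactorizationMonoid.radical, Finset.prod_val]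
    have hrad : (Ideal.span {f}).radical =
        Ideal.span {UniqueFactorizationMonoid.radical f} := by
      apply aux_radical_span
      · rintro a ⟨k, hk⟩
        rw [← hprod]
        apply aux_multiset_prod_dvd
        · intro b hb
          exact UniqueFactorizationMonoid.prime_of_normalized_factor b
            (Multiset.mem_toFinset.mp hb)
        · exact (UniqueFactorizationMonoid.primeFactors f).nodup
        · intro b hb b' hb' hassoc
          have h1 := UniqueFactorizationMonoid.normalize_normalized_factor b
            (Multiset.mem_toFinset.mp hb)
          have h2 := UniqueFactorizationMonoid.normalize_normalized_factor b'
            (Multiset.mem_toFinset.mp hb')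
          rw [← h1, ← h2]
          exact normalize_eq_normalize hassoc.dvd hassoc.symm.dvd
        · intro b hb
          have hbf : b ∣ f := UniqueFactorizationMonoid.dvd_of_mem_normalizedFactors
            (Multiset.mem_toFinset.mp hb)
          have hbp := UniqueFactorizationMonoid.prime_of_normalized_factor b
            (Multiset.mem_toFinset.mp hb)
          rcases Nat.eq_zero_or_pos k with rfl | hk0
          · exact absurd (isUnit_of_dvd_unit hbf (isUnit_of_dvd_one (by simpa using hk)))
              hbp.not_unit
          · exact hbp.dvd_of_dvd_pow (hbf.trans hk)
      · obtain ⟨k, hle⟩ := Multiset.le_smul_dedup (UniqueFactorizationMonoid.normalizedFactors f)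
        refine ⟨k, ?_⟩
        have h1 : f ∣ (UniqueFactorizationMonoid.normalizedFactors f).prod :=
          (UniqueFactorizationMonoid.prod_normalizedFactors hf).symm.dvd
        refine h1.trans ?_
        calc (UniqueFactorizationMonoid.normalizedFactors f).prod
            ∣ (k • (UniqueFactorizationMonoid.normalizedFactors f).dedup).prod :=
              Multiset.prod_dvd_prod_of_le hle
          _ = (UniqueFactorizationMonoid.normalizedFactors f).dedup.prod ^ k :=
              Multiset.prod_nsmul _ k
          _ = UniqueFactorizationMonoid.radical f ^ k := by
              rw [← hprod, UniqueFactorizationMonoid.primeFactors, Multiset.toFinset_val]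
    exact ⟨UniqueFactorizationMonoid.radical f, hrad, aux_MO_range hrad, aux_inj hf hrad⟩
  · -- Part 2: explicit description
    intro n c p m hc hp hass hm hfac
    have hrad := aux_rad_factors hc hp hass hm hfac
    have hfac' : f = c * (∏ i, p i ^ (m i - 1)) * (∏ i, p i) := by
      rw [hfac, mul_assoc, ← Finset.prod_mul_distrib]
      congr 1
      apply Finset.prod_congr rfl
      intro i _
      rw [← pow_succ, Nat.sub_add_cancel (hm i)]
    exact aux_MO_explicit hc hfac' hrad
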